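/- Variance of the OUE frequency estimator for an unheld value: in the OUE frequency-estimation setting with ε > 0, domain size d, p = 1/2, q = 1/(e^ε + 1), and n users reporting independently via OUE, if no user holds the value x (i.e., f_x = 0), then the estimator f̂_x = (c_x/n − q)/(p − q) has variance Var[f̂_x] = 4·e^ε/((e^ε − 1)² · n). -/

import Mathlib

open MeasureTheory ProbabilityTheory

/-- Probability that the OUE mechanism on input `x` (one-hot encoding of `x` over the
finite domain `X`, bitwise independent perturbation keeping the 1-bit with probability
`p = 1/2` and flipping each 0-bit to 1 with probability `q = 1/(e^ε + 1)`) outputs the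
binary vector `B' : X → Bool`. -/
noncomputable def oueProb {X : Type*} [Fintype X] [DecidableEq X]
    (ε : ℝ) (x : X) (B' : X → Bool) : ℝ :=
  ∏ i : X,
    if i = x then (if B' i then (1 / 2 : ℝ) else 1 / 2)
    else (if B' i then 1 / (Real.exp ε + 1) else 1 - 1 / (Real.exp ε + 1))

lemma oueProb_nonneg {X : Type*} [Fintype X] [DecidableEq X] (ε : ℝ) (x : X) (b : X → Bool) :
    0 ≤ oueProb ε x b := by
  have h1 : (0:ℝ) < Real.exp ε + 1 := by positivity
  have h2 : 1 / (Real.exp ε + 1) ≤ 1 := by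
    rw [div_le_one h1]; linarith [Real.exp_pos ε]
  unfold oueProb
  apply Finset.prod_nonneg
  intro i _
  split_ifs <;> first | positivity | linarith

lemma sum_oueProb_x_true {X : Type*} [Fintype X] [DecidableEq X] (ε : ℝ) (y x : X)
    (hyx : y ≠ x) :
    ∑ b ∈ Finset.univ.filter (fun b : X → Bool => b x = true), oueProb ε y b
      = 1 / (Real.exp ε + 1) := by
  classical
  set q : ℝ := 1 / (Real.exp ε + 1) with hqdef
  set F : X → Bool → ℝ := fun i t =>
    if i = x then (if t then q else 0)
    else (if i = y then (1/2 : ℝ) else if t then q else 1 - q) with hF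
  have key : ∀ b : X → Bool, (if b x = true then oueProb ε y b else 0) = ∏ i, F i (b i) := by
    intro b
    by_cases hbx : b x = true
    · rw [if_pos hbx]
      unfold oueProb
      apply Finset.prod_congr rfl
      intro i _
      by_cases hix : i = x
      · subst hix
        have hiy : i ≠ y := fun h => hyx (h.symm)
        simp [hF, hbx, if_neg hiy, hqdef]
      · by_cases hiy : i = y <;> simp [hF, hix, hiy, hyx, hqdef, one_div]
    · rw [if_neg hbx]
      symm
      apply Finset.prod_eq_zero (Finset.mem_univ x)
      simp [hF, hbx]
  calc ∑ b ∈ Finset.univ.filter (fun b : X → Bool => b x = true), oueProb ε y b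
      = ∑ b : X → Bool, (if b x = true then oueProb ε y b else 0) := by
        rw [Finset.sum_filter]
    _ = ∑ b : X → Bool, ∏ i, F i (b i) := by
        exact Finset.sum_congr rfl fun b _ => key b
    _ = ∏ i, ∑ t : Bool, F i t := (Fintype.prod_sum F).symm
    _ = ∏ i : X, (if i = x then q else 1) := by
        apply Finset.prod_congr rfl
        intro i _
        by_cases hix : i = x
        · simp [hF, hix]
        · by_cases hiy : i = y <;> simp [hF, hix, hiy] <;> ring
    _ = q := by simp

/-- Variance of the OUE frequency estimator for an unheld value: with `p = 1/2` and
`q = 1/(e^ε + 1)`, if `n` users independently report via OUE and no user holds the value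
`x` (`f_x = 0`), then the estimator `f̂_x = (c_x/n − q)/(p − q)` has variance
`4·e^ε/((e^ε − 1)²·n)`. -/
theorem oue_estimator_variance_unheld {X : Type*} [Fintype X] [DecidableEq X]
    (ε : ℝ) (hε : 0 < ε)
    (p q : ℝ) (hp : p = 1 / 2) (hq : q = 1 / (Real.exp ε + 1))
    (n : ℕ) (hn : 0 < n) (xs : Fin n → X)
    {Ω : Type*} [MeasurableSpace Ω] (μ : Measure Ω) [IsProbabilityMeasure μ]
    (B : Fin n → Ω → (X → Bool)) (hmeas : ∀ j, Measurable (B j))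
    (hindep : iIndepFun B μ)
    (hdist : ∀ (j : Fin n) (b : X → Bool),
      μ {ω | B j ω = b} = ENNReal.ofReal (oueProb ε (xs j) b))
    (x : X) (hx : ∀ j, xs j ≠ x) :
    variance (fun ω =>
        (((Finset.filter (fun j => B j ω x = true) Finset.univ).card : ℝ) / n - q) / (p - q)) μ
      = 4 * Real.exp ε / ((Real.exp ε - 1) ^ 2 * n) := by
  classical
  have hE1 : (1:ℝ) < Real.exp ε := by
    rw [← Real.exp_zero]; exact Real.exp_lt_exp.2 hε
  have hE0 : (0:ℝ) < Real.exp ε := Real.exp_pos ε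
  have hq0 : 0 < q := by rw [hq]; positivity
  have hq1 : q < 1 := by
    rw [hq, div_lt_one (by positivity)]; linarith
  have hn' : ((n:ℝ)) ≠ 0 := Nat.cast_ne_zero.2 hn.ne'
  have hpq : p - q = (Real.exp ε - 1) / (2 * (Real.exp ε + 1)) := by
    rw [hp, hq]; field_simp; ring
  have hpq0 : p - q ≠ 0 := by
    rw [hpq]
    apply div_ne_zero
    · linarith
    · positivity
  have hsetm : MeasurableSet {b : X → Bool | b x = true} := by
    have he : {b : X → Bool | b x = true} = (fun b : X → Bool => b x) ⁻¹' {true} := rfl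
    rw [he]; exact measurable_pi_apply x (measurableSet_singleton true)
  have hsm : ∀ j, MeasurableSet {ω | B j ω x = true} := fun j => (hmeas j) hsetm
  have hμ : ∀ j, μ {ω | B j ω x = true} = ENNReal.ofReal q := by
    intro j
    have hdecomp : {ω | B j ω x = true}
        = ⋃ b ∈ Finset.univ.filter (fun b : X → Bool => b x = true), {ω | B j ω = b} := by
      ext ω
      simp only [Set.mem_setOf_eq, Set.mem_iUnion, Finset.mem_filter, Finset.mem_univ,
        true_and, exists_prop]
      constructor
      · intro h; exact ⟨B j ω, h, rfl⟩
      · rintro ⟨b, hb, hbe⟩; exact hbe.symm ▸ hb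
    have hd : Set.PairwiseDisjoint
        (↑(Finset.univ.filter (fun b : X → Bool => b x = true)))
        (fun b => {ω | B j ω = b}) := by
      intro b _ c _ hbc
      apply Set.disjoint_left.2
      intro ω hωb hωc
      exact hbc (hωb.symm.trans hωc)
    have hm : ∀ b ∈ Finset.univ.filter (fun b : X → Bool => b x = true),
        MeasurableSet {ω | B j ω = b} := fun b _ => hmeas j (measurableSet_singleton b)
    rw [hdecomp, measure_biUnion_finset hd hm]
    calc ∑ b ∈ Finset.univ.filter (fun b : X → Bool => b x = true), μ {ω | B j ω = b}
        = ∑ b ∈ Finset.univ.filter (fun b : X → Bool => b x = true),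
            ENNReal.ofReal (oueProb ε (xs j) b) :=
          Finset.sum_congr rfl fun b _ => hdist j b
      _ = ENNReal.ofReal
            (∑ b ∈ Finset.univ.filter (fun b : X → Bool => b x = true), oueProb ε (xs j) b) :=
          (ENNReal.ofReal_sum_of_nonneg fun b _ => oueProb_nonneg ε (xs j) b).symm
      _ = ENNReal.ofReal q := by rw [sum_oueProb_x_true ε (xs j) x (hx j), hq]
  set Z : Fin n → Ω → ℝ := fun j ω => if B j ω x = true then 1 else 0 with hZ
  have hZind : ∀ j, Z j = Set.indicator {ω | B j ω x = true} (fun _ => (1:ℝ)) := by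
    intro j; funext ω
    by_cases h : B j ω x = true
    · simp [hZ, h]
    · simp [hZ, h]
  have hZint : ∀ j, Integrable (Z j) μ := by
    intro j
    rw [hZind j]
    exact (integrable_indicator_iff (hsm j)).2 (integrableOn_const (measure_lt_top μ _).ne)
  have hZint' : ∀ j, ∫ ω, Z j ω ∂μ = q := by
    intro j
    rw [show (fun ω => Z j ω) = Z j from rfl, hZind j, integral_indicator_const (1:ℝ) (hsm j),
      measureReal_def, hμ j, smul_eq_mul, mul_one, ENNReal.toReal_ofReal hq0.le]
  set Y : Fin n → Ω → ℝ := fun j ω => Z j ω - q with hY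
  have hZmeas : ∀ j, Measurable (Z j) := by
    intro j; rw [hZind j]; exact measurable_const.indicator (hsm j)
  have hYmeas : ∀ j, Measurable (Y j) := fun j => (hZmeas j).sub measurable_const
  have hYbound : ∀ j, ∀ ω, ‖Y j ω‖ ≤ 1 + q := by
    intro j ω
    rw [Real.norm_eq_abs]
    simp only [hY, hZ]
    split_ifs <;> rw [abs_le] <;> constructor <;> linarith
  have hY2 : ∀ j, MemLp (Y j) 2 μ := fun j =>
    MemLp.of_bound (hYmeas j).aestronglyMeasurable (1 + q)
      (Filter.Eventually.of_forall (hYbound j))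
  have hEY : ∀ j, ∫ ω, Y j ω ∂μ = 0 := by
    intro j
    have : (fun ω => Y j ω) = fun ω => Z j ω - q := rfl
    rw [this, integral_sub (hZint j) (integrable_const q), hZint' j, integral_const]
    simp
  have hEY2 : ∀ j, ∫ ω, (Y j ω) ^ 2 ∂μ = q - q ^ 2 := by
    intro j
    have hpt : (fun ω => (Y j ω) ^ 2) = fun ω => (1 - 2*q) * Z j ω + q ^ 2 := by
      funext ω
      simp only [hY, hZ]
      split_ifs <;> ring
    rw [hpt, integral_add ((hZint j).const_mul _) (integrable_const _), integral_const_mul,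
      hZint' j, integral_const]
    simp only [probReal_univ, smul_eq_mul, one_mul]
    ring
  have hVarY : ∀ j, variance (Y j) μ = q - q ^ 2 := by
    intro j
    rw [variance_eq_sub (hY2 j)]
    have h2 : μ[(Y j) ^ 2] = q - q ^ 2 := hEY2 j
    rw [h2, hEY j]
    ring
  set φ : (X → Bool) → ℝ := fun b => (if b x = true then (1:ℝ) else 0) - q with hφ
  have hφm : Measurable φ := measurable_of_countable φ
  have hYindep : iIndepFun Y μ :=
    hindep.comp (fun _ => φ) (fun _ => hφm)
  have hpair : Set.Pairwise ↑(Finset.univ : Finset (Fin n))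
      fun i j => IndepFun (Y i) (Y j) μ :=
    fun i _ j _ hij => hYindep.indepFun hij
  have hVarSum : variance (∑ j, Y j) μ = n * (q - q ^ 2) := by
    rw [IndepFun.variance_sum (fun j _ => hY2 j) hpair]
    simp [hVarY, Finset.sum_const, Finset.card_univ, nsmul_eq_mul]
    ring
  have hfun : (fun ω =>
        (((Finset.filter (fun j => B j ω x = true) Finset.univ).card : ℝ) / n - q) / (p - q))
      = fun ω => (1 / ((n:ℝ) * (p - q))) * (∑ j, Y j) ω := by
    funext ω
    rw [Finset.sum_apply]
    have hcard : ((Finset.filter (fun j => B j ω x = true) Finset.univ).card : ℝ)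
        = ∑ j, Z j ω := (Finset.sum_boole _ _).symm
    have h1 : ∑ j, Y j ω
        = ((Finset.filter (fun j => B j ω x = true) Finset.univ).card : ℝ) - n * q := by
      simp only [hY]
      rw [Finset.sum_sub_distrib, Finset.sum_const, Finset.card_univ, Fintype.card_fin,
        nsmul_eq_mul, ← hcard]
    rw [h1]
    field_simp
  rw [hfun, variance_const_mul, hVarSum]
  have hqval : q - q ^ 2 = Real.exp ε / (Real.exp ε + 1) ^ 2 := by
    rw [hq]; field_simp; ring
  rw [hqval, hpq]
  have h1 : Real.exp ε + 1 ≠ 0 := by positivity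
  have h2 : Real.exp ε - 1 ≠ 0 := sub_ne_zero.2 hE1.ne'
  field_simp
  ring
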